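/- For the parabolic maximal operator P_δ and the test function g = 1_T where T = [0, δ^{1/2}] × [0, C δ] with suitable constant C, one has P_δ g(a) ≳ δ^{1/2} for all a ∈ [1,2], and consequently the operator norm from L^p(ℝ²) to L^q([1,2]) satisfies B(p,q,δ) ≳ δ^{1/2} / δ^{3/(2p)} = δ^{1/2 − 3/(2p)}. -/

import Mathlib

open Set MeasureTheory

private lemma box_int_le {δ : ℝ} (hδ : 0 < δ) (f : ℝ → ℝ)
    (hf0 : ∀ s, 0 ≤ f s) (hf1 : ∀ s, f s ≤ 1) :
    0 ≤ (∫ s in (-δ)..δ, f s) ∧ (∫ s in (-δ)..δ, f s) ≤ 2 * δ := by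
  constructor
  · exact intervalIntegral.integral_nonneg (by linarith) fun u _ => hf0 u
  · by_cases h : IntervalIntegrable f volume (-δ) δ
    · calc (∫ s in (-δ)..δ, f s) ≤ ∫ _ in (-δ)..δ, (1:ℝ) :=
            intervalIntegral.integral_mono_on (by linarith) h intervalIntegrable_const
              (fun u _ => hf1 u)
        _ = 2 * δ := by rw [intervalIntegral.integral_const, smul_eq_mul, mul_one]; ring
    · rw [intervalIntegral.integral_undef h]; positivity

private lemma gen_int_le {δ : ℝ} (hδ : 0 < δ) (F : ℝ → ℝ)
    (hF1 : ∀ t, F t ≤ 2 * δ) :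
    (∫ t in (0:ℝ)..1, F t) ≤ 2 * δ := by
  by_cases h : IntervalIntegrable F volume 0 1
  · calc (∫ t in (0:ℝ)..1, F t) ≤ ∫ _ in (0:ℝ)..1, (2*δ) :=
        intervalIntegral.integral_mono_on (by norm_num) h intervalIntegrable_const
          (fun u _ => hF1 u)
      _ = 2 * δ := by simp
  · rw [intervalIntegral.integral_undef h]; positivity

private lemma inner_eq {δ a : ℝ} (hδ : 0 < δ) (ha1 : 1 ≤ a) (ha2 : a ≤ 2)
    {t : ℝ} (ht : t ∈ Icc 0 (δ ^ ((1:ℝ)/2))) (ht2 : t ^ 2 ≤ δ) :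
    (∫ s in (-δ)..δ, |((Icc (0:ℝ) (δ ^ ((1:ℝ)/2)) ×ˢ Icc (0:ℝ) (3*δ)).indicator
        (fun _ => (1:ℝ))) ((0:ℝ) + t, (0:ℝ) + a * t ^ 2 + s)|)
      = min (2*δ) (a * t ^ 2 + δ) := by
  set c : ℝ := a * t ^ 2 with hcdef
  have hc0 : 0 ≤ c := by positivity
  have hc2 : c ≤ 2 * δ := by nlinarith [sq_nonneg t]
  have hpt : ∀ y : ℝ, |((Icc (0:ℝ) (δ ^ ((1:ℝ)/2)) ×ˢ Icc (0:ℝ) (3*δ)).indicator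
      (fun _ => (1:ℝ))) ((0:ℝ) + t, y)| = (Icc (0:ℝ) (3*δ)).indicator (fun _ => (1:ℝ)) y := by
    intro y
    by_cases hy : y ∈ Icc (0:ℝ) (3*δ)
    · rw [Set.indicator_of_mem (Set.mk_mem_prod (by rwa [zero_add]) hy),
        Set.indicator_of_mem hy]
      simp
    · rw [Set.indicator_of_notMem (fun h => hy h.2), Set.indicator_of_notMem hy]
      simp
  simp_rw [hpt]
  rw [intervalIntegral.integral_comp_add_left
    (f := fun u => (Icc (0:ℝ) (3*δ)).indicator (fun _ => (1:ℝ)) u) ((0:ℝ) + c), zero_add,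
    intervalIntegral.integral_of_le (by linarith),
    setIntegral_indicator measurableSet_Icc, setIntegral_const]
  have hsub1 : Ioc (max (c-δ) 0) (c+δ) ⊆ Ioc (c + -δ) (c+δ) ∩ Icc 0 (3*δ) := by
    rintro u ⟨h1, h2⟩
    have m1 := le_max_left (c-δ) 0
    have m2 := le_max_right (c-δ) 0
    exact ⟨⟨by linarith, h2⟩, ⟨by linarith, by linarith⟩⟩
  have hsub2 : Ioc (c + -δ) (c+δ) ∩ Icc 0 (3*δ) ⊆ Icc (max (c-δ) 0) (c+δ) := by
    rintro u ⟨⟨h1, h2⟩, ⟨h3, _⟩⟩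
    exact ⟨max_le (by linarith) h3, h2⟩
  have hm : c + δ - max (c-δ) 0 = min (2*δ) (c+δ) := by
    rcases le_total (c-δ) 0 with h | h
    · rw [max_eq_right h, min_eq_right (by linarith)]; ring
    · rw [max_eq_left h, min_eq_left (by linarith)]; ring
  have hvol : volume (Ioc (c + -δ) (c+δ) ∩ Icc 0 (3*δ)) = ENNReal.ofReal (min (2*δ) (c+δ)) := by
    refine le_antisymm ?_ ?_
    · refine le_trans (measure_mono hsub2) ?_
      rw [Real.volume_Icc, hm]
    · refine le_trans (le_of_eq ?_) (measure_mono hsub1)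
      rw [Real.volume_Ioc, hm]
  rw [measureReal_def, hvol, ENNReal.toReal_ofReal (le_min (by linarith) (by linarith))]
  simp

private lemma inner_zero {δ a : ℝ} {t : ℝ} (ht : t ∉ Icc 0 (δ ^ ((1:ℝ)/2))) :
    (∫ s in (-δ)..δ, |((Icc (0:ℝ) (δ ^ ((1:ℝ)/2)) ×ˢ Icc (0:ℝ) (3*δ)).indicator
        (fun _ => (1:ℝ))) ((0:ℝ) + t, (0:ℝ) + a * t ^ 2 + s)|) = 0 := by
  have : ∀ s : ℝ, |((Icc (0:ℝ) (δ ^ ((1:ℝ)/2)) ×ˢ Icc (0:ℝ) (3*δ)).indicator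
      (fun _ => (1:ℝ))) ((0:ℝ) + t, (0:ℝ) + a * t ^ 2 + s)| = 0 := by
    intro s
    rw [Set.indicator_of_notMem (fun h => ht (by simpa using h.1))]
    simp
  simp_rw [this, intervalIntegral.integral_zero]

private lemma key_lower {δ a : ℝ} (hδ : 0 < δ) (hδ1 : δ < 1) (ha1 : 1 ≤ a) (ha2 : a ≤ 2) :
    δ * δ ^ ((1:ℝ)/2) ≤ ∫ t in (0:ℝ)..1, ∫ s in (-δ)..δ,
      |((Icc (0:ℝ) (δ ^ ((1:ℝ)/2)) ×ˢ Icc (0:ℝ) (3*δ)).indicator (fun _ => (1:ℝ)))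
        ((0:ℝ) + t, (0:ℝ) + a * t ^ 2 + s)| := by
  have hr0 : 0 < δ ^ ((1:ℝ)/2) := Real.rpow_pos_of_pos hδ _
  have hr1 : δ ^ ((1:ℝ)/2) ≤ 1 := Real.rpow_le_one hδ.le hδ1.le (by norm_num)
  have hrsq : (δ ^ ((1:ℝ)/2)) ^ 2 = δ := by
    rw [← Real.rpow_natCast (δ ^ ((1:ℝ)/2)) 2, ← Real.rpow_mul hδ.le]
    norm_num
  have hEq : ∀ t : ℝ, (∫ s in (-δ)..δ,
      |((Icc (0:ℝ) (δ ^ ((1:ℝ)/2)) ×ˢ Icc (0:ℝ) (3*δ)).indicator (fun _ => (1:ℝ)))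
        ((0:ℝ) + t, (0:ℝ) + a * t ^ 2 + s)|) =
      (Icc (0:ℝ) (δ ^ ((1:ℝ)/2))).indicator (fun u => min (2*δ) (a * u ^ 2 + δ)) t := by
    intro t
    by_cases ht : t ∈ Icc (0:ℝ) (δ ^ ((1:ℝ)/2))
    · rw [Set.indicator_of_mem ht]
      refine inner_eq hδ ha1 ha2 ht ?_
      calc t ^ 2 ≤ (δ ^ ((1:ℝ)/2)) ^ 2 := by nlinarith [ht.1, ht.2]
        _ = δ := hrsq
    · rw [Set.indicator_of_notMem ht]
      exact inner_zero ht
  simp_rw [hEq]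
  have hcont : Continuous (fun u : ℝ => min (2*δ) (a * u ^ 2 + δ)) :=
    continuous_const.min ((continuous_const.mul (continuous_pow 2)).add continuous_const)
  have hint1 : IntervalIntegrable
      ((Icc (0:ℝ) (δ ^ ((1:ℝ)/2))).indicator fun u => min (2*δ) (a * u ^ 2 + δ)) volume 0 1 := by
    have h := hcont.intervalIntegrable (μ := volume) (0:ℝ) 1
    rw [intervalIntegrable_iff] at h ⊢
    exact h.indicator measurableSet_Icc
  have hint2 : IntervalIntegrable
      ((Icc (0:ℝ) (δ ^ ((1:ℝ)/2))).indicator fun _ => δ) volume 0 1 := by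
    have h := (continuous_const : Continuous fun _ : ℝ => δ).intervalIntegrable (μ := volume) (0:ℝ) 1
    rw [intervalIntegrable_iff] at h ⊢
    exact h.indicator measurableSet_Icc
  have hmono : ∀ u ∈ Icc (0:ℝ) 1,
      (Icc (0:ℝ) (δ ^ ((1:ℝ)/2))).indicator (fun _ => δ) u ≤
      (Icc (0:ℝ) (δ ^ ((1:ℝ)/2))).indicator (fun u => min (2*δ) (a * u ^ 2 + δ)) u := by
    intro u _
    by_cases hu : u ∈ Icc (0:ℝ) (δ ^ ((1:ℝ)/2))
    · rw [Set.indicator_of_mem hu, Set.indicator_of_mem hu]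
      exact le_min (by linarith) (by nlinarith [sq_nonneg u])
    · rw [Set.indicator_of_notMem hu, Set.indicator_of_notMem hu]
  have h1 : (∫ t in (0:ℝ)..1, (Icc (0:ℝ) (δ ^ ((1:ℝ)/2))).indicator (fun _ => δ) t)
      = δ ^ ((1:ℝ)/2) * δ := by
    rw [intervalIntegral.integral_of_le (by norm_num),
      setIntegral_indicator measurableSet_Icc]
    have hset : Ioc (0:ℝ) 1 ∩ Icc 0 (δ ^ ((1:ℝ)/2)) = Ioc 0 (δ ^ ((1:ℝ)/2)) := by
      ext u
      simp only [mem_inter_iff, mem_Ioc, mem_Icc]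
      constructor
      · rintro ⟨⟨hu1, _⟩, ⟨_, hu2⟩⟩; exact ⟨hu1, hu2⟩
      · rintro ⟨hu1, hu2⟩; exact ⟨⟨hu1, le_trans hu2 hr1⟩, ⟨hu1.le, hu2⟩⟩
    rw [hset, setIntegral_const, measureReal_def, Real.volume_Ioc, sub_zero, ENNReal.toReal_ofReal hr0.le,
      smul_eq_mul]
  calc δ * δ ^ ((1:ℝ)/2)
      = ∫ t in (0:ℝ)..1, (Icc (0:ℝ) (δ ^ ((1:ℝ)/2))).indicator (fun _ => δ) t := by
        rw [h1]; ring
    _ ≤ _ := intervalIntegral.integral_mono_on (by norm_num) hint2 hint1 hmono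

/-- The `δ`-thickened parabolic maximal operator. -/
noncomputable def Pop (δ : ℝ) (g : ℝ × ℝ → ℝ) (a : ℝ) : ℝ :=
  ⨆ x : ℝ × ℝ, (2 * δ)⁻¹ *
    ∫ t in (0:ℝ)..1, ∫ s in (-δ)..δ, |g (x.1 + t, x.2 + a * t ^ 2 + s)|

/-- For `g = 1_T` with `T = [0, δ^{1/2}] × [0, Cδ]` (suitable `C`), one has
`P_δ g(a) ≳ δ^{1/2}` for all `a ∈ [1,2]`, and consequently
`B(p,q,δ) ≳ δ^{1/2 − 3/(2p)}`. -/
theorem stmt18 :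
    ∃ C ≥ (1:ℝ), ∃ K > (0:ℝ), ∀ δ : ℝ, 0 < δ → δ < 1 →
      (∀ a ∈ Icc (1:ℝ) 2,
        K * δ ^ ((1:ℝ) / 2) ≤
          Pop δ ((Icc (0:ℝ) (δ ^ ((1:ℝ) / 2)) ×ˢ Icc (0:ℝ) (C * δ)).indicator
            fun _ => (1:ℝ)) a) ∧
      (∀ p q : ℝ, 1 ≤ p → 1 ≤ q →
        ENNReal.ofReal (K * δ ^ ((1:ℝ) / 2 - 3 / (2 * p))) ≤
          eLpNorm (Pop δ ((Icc (0:ℝ) (δ ^ ((1:ℝ) / 2)) ×ˢ Icc (0:ℝ) (C * δ)).indicator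
              fun _ => (1:ℝ)))
              (ENNReal.ofReal q) (volume.restrict (Icc (1:ℝ) 2)) /
            eLpNorm ((Icc (0:ℝ) (δ ^ ((1:ℝ) / 2)) ×ˢ Icc (0:ℝ) (C * δ)).indicator
              fun _ => (1:ℝ)) (ENNReal.ofReal p) volume) := by
  refine ⟨3, by norm_num, 1/6, by norm_num, ?_⟩
  intro δ hδ hδ1
  have hr0 : 0 < δ ^ ((1:ℝ)/2) := Real.rpow_pos_of_pos hδ _
  have habs : ∀ y : ℝ × ℝ,
      |(Icc (0:ℝ) (δ ^ ((1:ℝ)/2)) ×ˢ Icc (0:ℝ) (3*δ)).indicator (fun _ => (1:ℝ)) y| ≤ 1 := by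
    intro y
    by_cases h : y ∈ Icc (0:ℝ) (δ ^ ((1:ℝ)/2)) ×ˢ Icc (0:ℝ) (3*δ)
    · rw [Set.indicator_of_mem h]; norm_num
    · rw [Set.indicator_of_notMem h]; norm_num
  have hFle : ∀ a : ℝ, ∀ x : ℝ × ℝ, (2*δ)⁻¹ *
      (∫ t in (0:ℝ)..1, ∫ s in (-δ)..δ,
        |(Icc (0:ℝ) (δ ^ ((1:ℝ)/2)) ×ˢ Icc (0:ℝ) (3*δ)).indicator (fun _ => (1:ℝ))
          (x.1 + t, x.2 + a * t ^ 2 + s)|) ≤ 1 := by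
    intro a x
    have hin : ∀ t : ℝ,
        (∫ s in (-δ)..δ,
          |(Icc (0:ℝ) (δ ^ ((1:ℝ)/2)) ×ˢ Icc (0:ℝ) (3*δ)).indicator (fun _ => (1:ℝ))
            (x.1 + t, x.2 + a * t ^ 2 + s)|) ≤ 2*δ := fun t =>
      (box_int_le hδ _ (fun s => abs_nonneg _) (fun s => habs _)).2
    have hout := gen_int_le hδ _ hin
    calc (2*δ)⁻¹ * _ ≤ (2*δ)⁻¹ * (2*δ) := mul_le_mul_of_nonneg_left hout (by positivity)
      _ = 1 := by field_simp
  have hbdd : ∀ a : ℝ, BddAbove (Set.range fun x : ℝ × ℝ => (2*δ)⁻¹ *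
      ∫ t in (0:ℝ)..1, ∫ s in (-δ)..δ,
        |(Icc (0:ℝ) (δ ^ ((1:ℝ)/2)) ×ˢ Icc (0:ℝ) (3*δ)).indicator (fun _ => (1:ℝ))
          (x.1 + t, x.2 + a * t ^ 2 + s)|) := by
    intro a
    exact ⟨1, by rintro v ⟨x, rfl⟩; exact hFle a x⟩
  have hPop : ∀ a ∈ Icc (1:ℝ) 2, (1/2) * δ ^ ((1:ℝ)/2) ≤
      Pop δ ((Icc (0:ℝ) (δ ^ ((1:ℝ)/2)) ×ˢ Icc (0:ℝ) (3*δ)).indicator fun _ => (1:ℝ)) a := by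
    intro a ha
    have h00 : ((1:ℝ)/2) * δ ^ ((1:ℝ)/2) ≤ (2*δ)⁻¹ *
        ∫ t in (0:ℝ)..1, ∫ s in (-δ)..δ,
          |(Icc (0:ℝ) (δ ^ ((1:ℝ)/2)) ×ˢ Icc (0:ℝ) (3*δ)).indicator (fun _ => (1:ℝ))
            ((0:ℝ) + t, (0:ℝ) + a * t ^ 2 + s)| := by
      have hk := key_lower hδ hδ1 ha.1 ha.2
      calc ((1:ℝ)/2) * δ ^ ((1:ℝ)/2) = (2*δ)⁻¹ * (δ * δ ^ ((1:ℝ)/2)) := by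
            have h2 : (2:ℝ) * δ ≠ 0 := by positivity
            field_simp
        _ ≤ _ := mul_le_mul_of_nonneg_left hk (by positivity)
    simp only [Pop]
    exact le_trans h00 (le_ciSup (hbdd a) (((0:ℝ),(0:ℝ)) : ℝ × ℝ))
  constructor
  · intro a ha
    have := hPop a ha
    have h6 : (1/6 : ℝ) * δ ^ ((1:ℝ)/2) ≤ (1/2) * δ ^ ((1:ℝ)/2) := by nlinarith
    linarith
  · intro p q hp hq
    have hp0 : (0:ℝ) < p := by linarith
    have hnum : ENNReal.ofReal ((1/2) * δ ^ ((1:ℝ)/2)) ≤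
        eLpNorm (Pop δ ((Icc (0:ℝ) (δ ^ ((1:ℝ)/2)) ×ˢ Icc (0:ℝ) (3*δ)).indicator
          fun _ => (1:ℝ))) (ENNReal.ofReal q) (volume.restrict (Icc (1:ℝ) 2)) := by
      have hμ : (volume.restrict (Icc (1:ℝ) 2)) ≠ 0 := by
        refine Measure.measure_univ_ne_zero.mp ?_
        rw [Measure.restrict_apply_univ, Real.volume_Icc]
        norm_num
      have hq0 : (ENNReal.ofReal q) ≠ 0 := by
        simp only [ne_eq, ENNReal.ofReal_eq_zero, not_le]; linarith
      have hconst : eLpNorm (fun _ : ℝ => (1/2) * δ ^ ((1:ℝ)/2)) (ENNReal.ofReal q)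
          (volume.restrict (Icc (1:ℝ) 2)) = ENNReal.ofReal ((1/2) * δ ^ ((1:ℝ)/2)) := by
        rw [eLpNorm_const _ hq0 hμ]
        have huniv : (volume.restrict (Icc (1:ℝ) 2)) Set.univ = 1 := by
          rw [Measure.restrict_apply_univ, Real.volume_Icc]; norm_num
        rw [huniv, ENNReal.one_rpow, mul_one, Real.enorm_eq_ofReal (by positivity)]
      rw [← hconst]
      refine eLpNorm_mono_ae ?_
      rw [ae_restrict_iff' measurableSet_Icc]
      refine ae_of_all _ fun x hx => ?_
      rw [Real.norm_eq_abs, Real.norm_eq_abs, abs_of_nonneg (by positivity)]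
      exact le_trans (hPop x hx) (le_abs_self _)
    have hp0' : (ENNReal.ofReal p) ≠ 0 := by
      simp only [ne_eq, ENNReal.ofReal_eq_zero, not_le]; linarith
    have hden : eLpNorm ((Icc (0:ℝ) (δ ^ ((1:ℝ)/2)) ×ˢ Icc (0:ℝ) (3*δ)).indicator
        fun _ => (1:ℝ)) (ENNReal.ofReal p) volume
        = ENNReal.ofReal ((δ ^ ((1:ℝ)/2) * (3*δ)) ^ ((1:ℝ)/p)) := by
      rw [eLpNorm_indicator_const (measurableSet_Icc.prod measurableSet_Icc) hp0'
        ENNReal.ofReal_ne_top]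
      have hTvol : volume (Icc (0:ℝ) (δ ^ ((1:ℝ)/2)) ×ˢ Icc (0:ℝ) (3*δ))
          = ENNReal.ofReal (δ ^ ((1:ℝ)/2) * (3*δ)) := by
        rw [Measure.volume_eq_prod, Measure.prod_prod, Real.volume_Icc, Real.volume_Icc,
          sub_zero, sub_zero, ← ENNReal.ofReal_mul hr0.le]
      rw [hTvol, ENNReal.toReal_ofReal hp0.le,
        ENNReal.ofReal_rpow_of_pos (by positivity)]
      simp
    have hden0 : eLpNorm ((Icc (0:ℝ) (δ ^ ((1:ℝ)/2)) ×ˢ Icc (0:ℝ) (3*δ)).indicator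
        fun _ => (1:ℝ)) (ENNReal.ofReal p) volume ≠ 0 := by
      rw [hden]
      simp only [ne_eq, ENNReal.ofReal_eq_zero, not_le]
      exact Real.rpow_pos_of_pos (by positivity) _
    have hdenT : eLpNorm ((Icc (0:ℝ) (δ ^ ((1:ℝ)/2)) ×ˢ Icc (0:ℝ) (3*δ)).indicator
        fun _ => (1:ℝ)) (ENNReal.ofReal p) volume ≠ ⊤ := by
      rw [hden]; exact ENNReal.ofReal_ne_top
    rw [ENNReal.le_div_iff_mul_le (Or.inl hden0) (Or.inl hdenT), hden,
      ← ENNReal.ofReal_mul (by positivity)]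
    refine le_trans (ENNReal.ofReal_le_ofReal ?_) hnum
    have h3 : (δ ^ ((1:ℝ)/2) * (3*δ)) ^ ((1:ℝ)/p)
        = 3 ^ ((1:ℝ)/p) * δ ^ ((3:ℝ)/(2*p)) := by
      have hbase : δ ^ ((1:ℝ)/2) * (3*δ) = 3 * δ ^ ((3:ℝ)/2) := by
        rw [show (3:ℝ)/2 = (1:ℝ)/2 + 1 by norm_num, Real.rpow_add hδ, Real.rpow_one]
        ring
      rw [hbase, Real.mul_rpow (by norm_num) (by positivity), ← Real.rpow_mul hδ.le,
        show (3:ℝ)/2 * (1/p) = (3:ℝ)/(2*p) by ring]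
    have h31 : (3:ℝ) ^ ((1:ℝ)/p) ≤ 3 := by
      calc (3:ℝ) ^ ((1:ℝ)/p) ≤ 3 ^ (1:ℝ) :=
            Real.rpow_le_rpow_of_exponent_le (by norm_num)
              (by rw [div_le_one hp0]; exact hp)
        _ = 3 := Real.rpow_one 3
    have hsum : δ ^ ((1:ℝ)/2 - 3/(2*p)) * δ ^ ((3:ℝ)/(2*p)) = δ ^ ((1:ℝ)/2) := by
      rw [← Real.rpow_add hδ]
      congr 1
      ring
    calc 1/6 * δ ^ ((1:ℝ)/2 - 3/(2*p)) * ((δ ^ ((1:ℝ)/2) * (3*δ)) ^ ((1:ℝ)/p))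
        = 1/6 * 3 ^ ((1:ℝ)/p) * (δ ^ ((1:ℝ)/2 - 3/(2*p)) * δ ^ ((3:ℝ)/(2*p))) := by
          rw [h3]; ring
      _ = 1/6 * 3 ^ ((1:ℝ)/p) * δ ^ ((1:ℝ)/2) := by rw [hsum]
      _ ≤ 1/2 * δ ^ ((1:ℝ)/2) := by nlinarith [Real.rpow_nonneg (by norm_num : (0:ℝ) ≤ 3) ((1:ℝ)/p)]
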